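/- If a distribution on the grid fractionally covers all vertices and a vertex v holds k ≥ 1 pebbles, then the excess weight W(v) − 1 at v is at least (12/25)k. -/

import Mathlib

/-- The infinite square grid: vertices `ℤ × ℤ`, adjacency iff Manhattan distance 1. -/
def gridGraph : SimpleGraph (ℤ × ℤ) where
  Adj p q := (p.1 - q.1).natAbs + (p.2 - q.2).natAbs = 1
  symm := ⟨fun p q h => by omega⟩
  loopless := ⟨fun p h => by simp at h⟩

/-- Manhattan distance on the grid. -/
def manhattan (p q : ℤ × ℤ) : ℕ := (p.1 - q.1).natAbs + (p.2 - q.2).natAbs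

lemma grid_walk_exists : ∀ (n : ℕ) (p q : ℤ × ℤ), manhattan p q = n →
    ∃ w : gridGraph.Walk p q, w.length = n := by
  intro n
  induction n with
  | zero =>
    intro p q h
    have : p = q := by
      unfold manhattan at h
      have h1 : p.1 = q.1 := by omega
      have h2 : p.2 = q.2 := by omega
      exact Prod.ext h1 h2
    subst this
    exact ⟨SimpleGraph.Walk.nil, rfl⟩
  | succ n ih =>
    intro p q h
    unfold manhattan at h
    by_cases h1 : p.1 = q.1
    · -- move second coordinate
      set s : ℤ := if q.2 > p.2 then 1 else -1 with hs
      have hadj : gridGraph.Adj p (p.1, p.2 + s) := by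
        show (p.1 - p.1).natAbs + (p.2 - (p.2 + s)).natAbs = 1
        rcases le_or_gt q.2 p.2 with hc | hc <;> simp [hs] <;> omega
      have hm : manhattan (p.1, p.2 + s) q = n := by
        unfold manhattan
        have h2 : p.2 ≠ q.2 := by omega
        rcases le_or_gt q.2 p.2 with hc | hc <;> simp [hs] <;> omega
      obtain ⟨w, hw⟩ := ih (p.1, p.2 + s) q hm
      exact ⟨SimpleGraph.Walk.cons hadj w, by simp [hw]⟩
    · set s : ℤ := if q.1 > p.1 then 1 else -1 with hs
      have hadj : gridGraph.Adj p (p.1 + s, p.2) := by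
        show (p.1 - (p.1 + s)).natAbs + (p.2 - p.2).natAbs = 1
        rcases le_or_gt q.1 p.1 with hc | hc <;> simp [hs] <;> omega
      have hm : manhattan (p.1 + s, p.2) q = n := by
        unfold manhattan
        rcases le_or_gt q.1 p.1 with hc | hc <;> simp [hs] <;> omega
      obtain ⟨w, hw⟩ := ih (p.1 + s, p.2) q hm
      exact ⟨SimpleGraph.Walk.cons hadj w, by simp [hw]⟩

lemma grid_walk_length_ge {p q : ℤ × ℤ} (w : gridGraph.Walk p q) :
    manhattan p q ≤ w.length := by
  induction w with
  | nil => simp [manhattan]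
  | cons hadj w ih =>
    rename_i a b c
    have h : (a.1 - b.1).natAbs + (a.2 - b.2).natAbs = 1 := hadj
    unfold manhattan at *
    rw [SimpleGraph.Walk.length_cons]
    omega

lemma grid_dist (p q : ℤ × ℤ) : gridGraph.dist p q = manhattan p q := by
  obtain ⟨w, hw⟩ := grid_walk_exists (manhattan p q) p q rfl
  have h1 : gridGraph.dist p q ≤ manhattan p q := hw ▸ SimpleGraph.dist_le w
  have hr : gridGraph.Reachable p q := ⟨w⟩
  obtain ⟨w', hw'⟩ := hr.exists_walk_length_eq_dist
  have h2 := grid_walk_length_ge w'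
  omega

/-- The one-dimensional factor bound: `2^{-|a+1|} + 2^{-|a-1|} ≤ (5/2)·2^{-|a|}`. -/
lemma factor_le (a : ℤ) :
    (1/2 : ℝ) ^ (a + 1).natAbs + (1/2 : ℝ) ^ (a - 1).natAbs
      ≤ (5/2) * (1/2 : ℝ) ^ a.natAbs := by
  rcases lt_trichotomy a 0 with h | h | h
  · obtain ⟨n, hn⟩ : ∃ n : ℕ, a.natAbs = n + 1 := ⟨a.natAbs - 1, by omega⟩
    have h1 : (a + 1).natAbs = n := by omega
    have h2 : (a - 1).natAbs = n + 2 := by omega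
    rw [h1, h2, hn]
    have : (0:ℝ) < (1/2 : ℝ) ^ n := by positivity
    ring_nf
    nlinarith [this]
  · subst h; norm_num
  · obtain ⟨n, hn⟩ : ∃ n : ℕ, a.natAbs = n + 1 := ⟨a.natAbs - 1, by omega⟩
    have h1 : (a + 1).natAbs = n + 2 := by omega
    have h2 : (a - 1).natAbs = n := by omega
    rw [h1, h2, hn]
    have : (0:ℝ) < (1/2 : ℝ) ^ n := by positivity
    ring_nf
    nlinarith [this]

/-- If a distribution fractionally covers every vertex of the grid and `v` carries
`k ≥ 1` pebbles, then the excess weight at `v` is at least `(12/25)k`. -/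
theorem excess_weight_bound (D : ℤ × ℤ → ℕ)
    (hcov : ∀ u : ℤ × ℤ, 1 ≤ ∑' v : ℤ × ℤ, (D v : ℝ) * (1 / 2) ^ (gridGraph.dist u v))
    (v : ℤ × ℤ) (hv : 1 ≤ D v) :
    (12 / 25 : ℝ) * (D v : ℝ) ≤
      (∑' w : ℤ × ℤ, (D w : ℝ) * (1 / 2) ^ (gridGraph.dist v w)) - 1 := by
  classical
  set f : ℤ × ℤ → ℤ × ℤ → ℝ :=
    fun u w => (D w : ℝ) * (1 / 2) ^ (gridGraph.dist u w) with hf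
  have hfnonneg : ∀ u w, 0 ≤ f u w := by
    intro u w; positivity
  have hsummable : ∀ u, Summable (f u) := by
    intro u
    by_contra h
    have := hcov u
    rw [show (∑' w : ℤ × ℤ, (D w : ℝ) * (1 / 2) ^ (gridGraph.dist u w)) = ∑' w, f u w from rfl,
      tsum_eq_zero_of_not_summable h] at this
    linarith
  -- the four diagonal points
  set u₁ : ℤ × ℤ := (v.1 + 1, v.2 + 1) with hu₁
  set u₂ : ℤ × ℤ := (v.1 + 1, v.2 - 1) with hu₂
  set u₃ : ℤ × ℤ := (v.1 - 1, v.2 + 1) with hu₃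
  set u₄ : ℤ × ℤ := (v.1 - 1, v.2 - 1) with hu₄
  -- modified weight function at v
  set g : ℤ × ℤ → ℝ :=
    fun w => (D w : ℝ) * (if w = v then (4/25 : ℝ) else (1/2) ^ (gridGraph.dist v w)) with hg
  -- pointwise bound: (4/25)(f u₁ + f u₂ + f u₃ + f u₄) ≤ g
  have hpoint : ∀ w, (4/25 : ℝ) * (f u₁ w + f u₂ w + f u₃ w + f u₄ w) ≤ g w := by
    intro w
    have hd : ∀ u : ℤ × ℤ, gridGraph.dist u w = (u.1 - w.1).natAbs + (u.2 - w.2).natAbs := by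
      intro u; rw [grid_dist]; rfl
    set a : ℤ := v.1 - w.1 with ha
    set b : ℤ := v.2 - w.2 with hb
    have e₁ : gridGraph.dist u₁ w = (a + 1).natAbs + (b + 1).natAbs := by
      rw [hd]; simp only [hu₁]; congr 1 <;> congr 1 <;> omega
    have e₂ : gridGraph.dist u₂ w = (a + 1).natAbs + (b - 1).natAbs := by
      rw [hd]; simp only [hu₂]; congr 1 <;> congr 1 <;> omega
    have e₃ : gridGraph.dist u₃ w = (a - 1).natAbs + (b + 1).natAbs := by
      rw [hd]; simp only [hu₃]; congr 1 <;> congr 1 <;> omega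
    have e₄ : gridGraph.dist u₄ w = (a - 1).natAbs + (b - 1).natAbs := by
      rw [hd]; simp only [hu₄]; congr 1 <;> congr 1 <;> omega
    have hDalt : (0:ℝ) ≤ (D w : ℝ) := by positivity
    simp only [hf, hg, e₁, e₂, e₃, e₄, pow_add]
    by_cases hwv : w = v
    · subst hwv
      have ha0 : a = 0 := by omega
      have hb0 : b = 0 := by omega
      simp only [ha0, hb0]
      norm_num
      try linarith
    · simp only [if_neg hwv]
      have hdvw : gridGraph.dist v w = a.natAbs + b.natAbs := by rw [hd]
      rw [hdvw, pow_add]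
      have hA := factor_le a
      have hB := factor_le b
      have hposA : (0:ℝ) ≤ (1/2 : ℝ) ^ (a+1).natAbs + (1/2 : ℝ) ^ (a-1).natAbs := by positivity
      have hposB : (0:ℝ) ≤ (1/2 : ℝ) ^ (b+1).natAbs + (1/2 : ℝ) ^ (b-1).natAbs := by positivity
      have hqa : (0:ℝ) ≤ (5/2) * (1/2 : ℝ) ^ a.natAbs := by positivity
      have key : ((1/2 : ℝ) ^ (a+1).natAbs + (1/2 : ℝ) ^ (a-1).natAbs) *
          ((1/2 : ℝ) ^ (b+1).natAbs + (1/2 : ℝ) ^ (b-1).natAbs)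
          ≤ ((5/2) * (1/2 : ℝ) ^ a.natAbs) * ((5/2) * (1/2 : ℝ) ^ b.natAbs) :=
        mul_le_mul hA hB hposB hqa
      nlinarith [key, hDalt, mul_le_mul_of_nonneg_left key hDalt]
  -- summability of g
  have hgnonneg : ∀ w, 0 ≤ g w := by
    intro w
    simp only [hg]
    by_cases hwv : w = v <;> simp [hwv] <;> positivity
  have hgle : ∀ w, g w ≤ f v w := by
    intro w
    simp only [hg, hf]
    by_cases hwv : w = v
    · subst hwv
      simp only [if_pos rfl]
      have : gridGraph.dist w w = 0 := SimpleGraph.dist_self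
      rw [this]
      have : (0:ℝ) ≤ (D w : ℝ) := by positivity
      norm_num
      nlinarith
    · simp [if_neg hwv]
  have hgsummable : Summable g := Summable.of_nonneg_of_le hgnonneg hgle (hsummable v)
  -- combined LHS function
  have hLHSsummable : Summable (fun w => (4/25 : ℝ) * (f u₁ w + f u₂ w + f u₃ w + f u₄ w)) :=
    ((((hsummable u₁).add (hsummable u₂)).add (hsummable u₃)).add (hsummable u₄)).mul_left _
  -- main inequality between tsums
  have hmain : (16/25 : ℝ) ≤ ∑' w, g w := by
    have h1 : (16/25 : ℝ) ≤ ∑' w, (4/25 : ℝ) * (f u₁ w + f u₂ w + f u₃ w + f u₄ w) := by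
      rw [tsum_mul_left]
      rw [Summable.tsum_add (((hsummable u₁).add (hsummable u₂)).add (hsummable u₃)) (hsummable u₄)]
      rw [Summable.tsum_add ((hsummable u₁).add (hsummable u₂)) (hsummable u₃)]
      rw [Summable.tsum_add (hsummable u₁) (hsummable u₂)]
      have c₁ := hcov u₁
      have c₂ := hcov u₂
      have c₃ := hcov u₃
      have c₄ := hcov u₄
      simp only [hf] at *
      nlinarith [c₁, c₂, c₃, c₄]
    exact le_trans h1 (Summable.tsum_le_tsum hpoint hLHSsummable hgsummable)
  -- relate tsum g to the original sum
  have hesummable : Summable (fun w : ℤ × ℤ => if w = v then (21/25 : ℝ) * (D v : ℝ) else 0) :=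
    summable_of_finite_support (Set.Finite.subset (Set.finite_singleton v) (by
      intro w hw
      simp only [Function.mem_support] at hw
      by_contra hne
      simp only [Set.mem_singleton_iff] at hne
      simp [hne] at hw))
  have hsplit : ∀ w, f v w = g w + (if w = v then (21/25 : ℝ) * (D v : ℝ) else 0) := by
    intro w
    simp only [hf, hg]
    by_cases hwv : w = v
    · subst hwv
      have : gridGraph.dist w w = 0 := SimpleGraph.dist_self
      rw [this]
      simp
      ring
    · simp [hwv]
  have htsum_split : ∑' w, f v w = (∑' w, g w) + (21/25 : ℝ) * (D v : ℝ) := by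
    calc ∑' w, f v w = ∑' w, (g w + (if w = v then (21/25 : ℝ) * (D v : ℝ) else 0)) := by
          exact tsum_congr hsplit
      _ = (∑' w, g w) + ∑' w, (if w = v then (21/25 : ℝ) * (D v : ℝ) else 0) :=
          Summable.tsum_add hgsummable hesummable
      _ = (∑' w, g w) + (21/25 : ℝ) * (D v : ℝ) := by rw [tsum_ite_eq]
  have hDv : (1:ℝ) ≤ (D v : ℝ) := by exact_mod_cast hv
  have : (∑' w : ℤ × ℤ, (D w : ℝ) * (1 / 2) ^ (gridGraph.dist v w)) = ∑' w, f v w := rfl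
  rw [this, htsum_split]
  linarith
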